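/- Let ψ = (φ₁, φ₂): Γ̄ → ℝ², where Γ̄ = {(Y₁,Y₂) ∈ ℝ²_{≥0} : Y₁+Y₂ < F̄, μ₁Y₁+μ₂Y₂ < Ē}, φ₁(Y₁,Y₂) = μ₁Y₁/(η₁(Ē−μ₁Y₁−μ₂Y₂)) + Y₁/(δ₁(F̄−Y₁−Y₂)) + (1+μ₁)Y₁, and φ₂(Y₁,Y₂) = μ₂Y₂/(η₂(Ē−μ₁Y₁−μ₂Y₂)) + Y₂/(δ₂(F̄−Y₁−Y₂)) + (1+μ₂)Y₂. If σ = (μ₁−μ₂)(μ₁δ₁η₂ − μ₂δ₂η₁) ≥ 0, then det J_ψ(Y₁,Y₂) > 0 for all (Y₁,Y₂) ∈ Γ̄. -/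

import Mathlib

open Set

set_option maxHeartbeats 1000000

lemma hasDerivAt_ratlin (p q r s x : ℝ) (h : r + s * x ≠ 0) :
    HasDerivAt (fun t => (p + q * t) / (r + s * t)) ((q * r - p * s) / (r + s * x) ^ 2) x := by
  have h1 : HasDerivAt (fun t : ℝ => p + q * t) q x := by
    simpa using (HasDerivAt.const_mul q (hasDerivAt_id x)).const_add p
  have h2 : HasDerivAt (fun t : ℝ => r + s * t) s x := by
    simpa using (HasDerivAt.const_mul s (hasDerivAt_id x)).const_add r
  have H := h1.div h2 h
  refine H.congr_deriv ?_
  ring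


/-- First partial derivative of a function of two real variables. -/
noncomputable def pd1 (g : ℝ → ℝ → ℝ) (a b : ℝ) : ℝ := deriv (fun t => g t b) a

/-- Second partial derivative of a function of two real variables. -/
noncomputable def pd2 (g : ℝ → ℝ → ℝ) (a b : ℝ) : ℝ := deriv (fun t => g a t) b

/-- Motif (i) (shared kinase and shared phosphatase for two substrates):
if `σ = (μ₁−μ₂)(μ₁δ₁η₂ − μ₂δ₂η₁) ≥ 0` then the Jacobian determinant of
`ψ = (φ₁, φ₂)` is positive on all of `Γ̄`. -/
theorem motif_i_det_pos (η₁ η₂ δ₁ δ₂ μ₁ μ₂ Ebar Fbar : ℝ)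
    (hη₁ : 0 < η₁) (hη₂ : 0 < η₂) (hδ₁ : 0 < δ₁) (hδ₂ : 0 < δ₂)
    (hμ₁ : 0 < μ₁) (hμ₂ : 0 < μ₂) (hE : 0 < Ebar) (hF : 0 < Fbar)
    (hσ : 0 ≤ (μ₁ - μ₂) * (μ₁ * δ₁ * η₂ - μ₂ * δ₂ * η₁)) :
    let φ₁ : ℝ → ℝ → ℝ := fun Y₁ Y₂ =>
      μ₁ * Y₁ / (η₁ * (Ebar - μ₁ * Y₁ - μ₂ * Y₂)) +
        Y₁ / (δ₁ * (Fbar - Y₁ - Y₂)) + (1 + μ₁) * Y₁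
    let φ₂ : ℝ → ℝ → ℝ := fun Y₁ Y₂ =>
      μ₂ * Y₂ / (η₂ * (Ebar - μ₁ * Y₁ - μ₂ * Y₂)) +
        Y₂ / (δ₂ * (Fbar - Y₁ - Y₂)) + (1 + μ₂) * Y₂
    ∀ Y₁ Y₂ : ℝ, 0 ≤ Y₁ → 0 ≤ Y₂ → Y₁ + Y₂ < Fbar →
      μ₁ * Y₁ + μ₂ * Y₂ < Ebar →
      0 < pd1 φ₁ Y₁ Y₂ * pd2 φ₂ Y₁ Y₂ - pd2 φ₁ Y₁ Y₂ * pd1 φ₂ Y₁ Y₂ := by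
  intro φ₁ φ₂ Y₁ Y₂ hY₁ hY₂ hFlt hElt
  have hEpos : 0 < Ebar - μ₁ * Y₁ - μ₂ * Y₂ := by linarith
  have hFpos : 0 < Fbar - Y₁ - Y₂ := by linarith
  have hEne : Ebar - μ₁ * Y₁ - μ₂ * Y₂ ≠ 0 := hEpos.ne'
  have hFne : Fbar - Y₁ - Y₂ ≠ 0 := hFpos.ne'
  -- pd1 φ₁
  have P11 : pd1 φ₁ Y₁ Y₂ =
      μ₁ * (Ebar - μ₂ * Y₂) / (η₁ * (Ebar - μ₁ * Y₁ - μ₂ * Y₂) ^ 2)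
        + (Fbar - Y₂) / (δ₁ * (Fbar - Y₁ - Y₂) ^ 2) + (1 + μ₁) := by
    have hne1 : (η₁ * Ebar - η₁ * μ₂ * Y₂) + (-(η₁ * μ₁)) * Y₁ ≠ 0 := by
      have e : (η₁ * Ebar - η₁ * μ₂ * Y₂) + (-(η₁ * μ₁)) * Y₁
          = η₁ * (Ebar - μ₁ * Y₁ - μ₂ * Y₂) := by ring
      rw [e]; exact ne_of_gt (mul_pos hη₁ hEpos)
    have hne2 : (δ₁ * Fbar - δ₁ * Y₂) + (-δ₁) * Y₁ ≠ 0 := by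
      have e : (δ₁ * Fbar - δ₁ * Y₂) + (-δ₁) * Y₁ = δ₁ * (Fbar - Y₁ - Y₂) := by ring
      rw [e]; exact ne_of_gt (mul_pos hδ₁ hFpos)
    have efun : (fun t => φ₁ t Y₂) = (fun t : ℝ =>
        (0 + μ₁ * t) / ((η₁ * Ebar - η₁ * μ₂ * Y₂) + (-(η₁ * μ₁)) * t)
          + (0 + 1 * t) / ((δ₁ * Fbar - δ₁ * Y₂) + (-δ₁) * t) + (1 + μ₁) * t) := by
      funext t
      show μ₁ * t / (η₁ * (Ebar - μ₁ * t - μ₂ * Y₂)) + t / (δ₁ * (Fbar - t - Y₂))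
          + (1 + μ₁) * t = _
      ring
    have h3 : HasDerivAt (fun t : ℝ => (1 + μ₁) * t) (1 + μ₁) Y₁ := by
      simpa using HasDerivAt.const_mul (1 + μ₁) (hasDerivAt_id Y₁)
    have H := ((hasDerivAt_ratlin 0 μ₁ _ _ Y₁ hne1).add
      (hasDerivAt_ratlin 0 1 _ _ Y₁ hne2)).add h3
    simp only [Pi.add_def] at H
    rw [← efun] at H
    simp only [pd1]
    rw [H.deriv,
      show (η₁ * Ebar - η₁ * μ₂ * Y₂) + (-(η₁ * μ₁)) * Y₁
          = η₁ * (Ebar - μ₁ * Y₁ - μ₂ * Y₂) from by ring,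
      show (δ₁ * Fbar - δ₁ * Y₂) + (-δ₁) * Y₁ = δ₁ * (Fbar - Y₁ - Y₂) from by ring]
    generalize Ebar - μ₁ * Y₁ - μ₂ * Y₂ = ε at hEne ⊢
    generalize Fbar - Y₁ - Y₂ = f at hFne ⊢
    field_simp
    ring
  -- pd2 φ₁
  have P21 : pd2 φ₁ Y₁ Y₂ =
      μ₁ * μ₂ * Y₁ / (η₁ * (Ebar - μ₁ * Y₁ - μ₂ * Y₂) ^ 2)
        + Y₁ / (δ₁ * (Fbar - Y₁ - Y₂) ^ 2) := by
    have hne1 : (η₁ * Ebar - η₁ * μ₁ * Y₁) + (-(η₁ * μ₂)) * Y₂ ≠ 0 := by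
      have e : (η₁ * Ebar - η₁ * μ₁ * Y₁) + (-(η₁ * μ₂)) * Y₂
          = η₁ * (Ebar - μ₁ * Y₁ - μ₂ * Y₂) := by ring
      rw [e]; exact ne_of_gt (mul_pos hη₁ hEpos)
    have hne2 : (δ₁ * Fbar - δ₁ * Y₁) + (-δ₁) * Y₂ ≠ 0 := by
      have e : (δ₁ * Fbar - δ₁ * Y₁) + (-δ₁) * Y₂ = δ₁ * (Fbar - Y₁ - Y₂) := by ring
      rw [e]; exact ne_of_gt (mul_pos hδ₁ hFpos)
    have efun : (fun t => φ₁ Y₁ t) = (fun t : ℝ =>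
        (μ₁ * Y₁ + 0 * t) / ((η₁ * Ebar - η₁ * μ₁ * Y₁) + (-(η₁ * μ₂)) * t)
          + (Y₁ + 0 * t) / ((δ₁ * Fbar - δ₁ * Y₁) + (-δ₁) * t) + (1 + μ₁) * Y₁) := by
      funext t
      show μ₁ * Y₁ / (η₁ * (Ebar - μ₁ * Y₁ - μ₂ * t)) + Y₁ / (δ₁ * (Fbar - Y₁ - t))
          + (1 + μ₁) * Y₁ = _
      ring
    have h3 : HasDerivAt (fun _ : ℝ => (1 + μ₁) * Y₁) 0 Y₂ := hasDerivAt_const _ _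
    have H := ((hasDerivAt_ratlin (μ₁ * Y₁) 0 _ _ Y₂ hne1).add
      (hasDerivAt_ratlin Y₁ 0 _ _ Y₂ hne2)).add h3
    simp only [Pi.add_def] at H
    rw [← efun] at H
    simp only [pd2]
    rw [H.deriv,
      show (η₁ * Ebar - η₁ * μ₁ * Y₁) + (-(η₁ * μ₂)) * Y₂
          = η₁ * (Ebar - μ₁ * Y₁ - μ₂ * Y₂) from by ring,
      show (δ₁ * Fbar - δ₁ * Y₁) + (-δ₁) * Y₂ = δ₁ * (Fbar - Y₁ - Y₂) from by ring]
    generalize Ebar - μ₁ * Y₁ - μ₂ * Y₂ = ε at hEne ⊢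
    generalize Fbar - Y₁ - Y₂ = f at hFne ⊢
    field_simp
    ring
  -- pd1 φ₂
  have P12 : pd1 φ₂ Y₁ Y₂ =
      μ₁ * μ₂ * Y₂ / (η₂ * (Ebar - μ₁ * Y₁ - μ₂ * Y₂) ^ 2)
        + Y₂ / (δ₂ * (Fbar - Y₁ - Y₂) ^ 2) := by
    have hne1 : (η₂ * Ebar - η₂ * μ₂ * Y₂) + (-(η₂ * μ₁)) * Y₁ ≠ 0 := by
      have e : (η₂ * Ebar - η₂ * μ₂ * Y₂) + (-(η₂ * μ₁)) * Y₁
          = η₂ * (Ebar - μ₁ * Y₁ - μ₂ * Y₂) := by ring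
      rw [e]; exact ne_of_gt (mul_pos hη₂ hEpos)
    have hne2 : (δ₂ * Fbar - δ₂ * Y₂) + (-δ₂) * Y₁ ≠ 0 := by
      have e : (δ₂ * Fbar - δ₂ * Y₂) + (-δ₂) * Y₁ = δ₂ * (Fbar - Y₁ - Y₂) := by ring
      rw [e]; exact ne_of_gt (mul_pos hδ₂ hFpos)
    have efun : (fun t => φ₂ t Y₂) = (fun t : ℝ =>
        (μ₂ * Y₂ + 0 * t) / ((η₂ * Ebar - η₂ * μ₂ * Y₂) + (-(η₂ * μ₁)) * t)
          + (Y₂ + 0 * t) / ((δ₂ * Fbar - δ₂ * Y₂) + (-δ₂) * t) + (1 + μ₂) * Y₂) := by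
      funext t
      show μ₂ * Y₂ / (η₂ * (Ebar - μ₁ * t - μ₂ * Y₂)) + Y₂ / (δ₂ * (Fbar - t - Y₂))
          + (1 + μ₂) * Y₂ = _
      ring
    have h3 : HasDerivAt (fun _ : ℝ => (1 + μ₂) * Y₂) 0 Y₁ := hasDerivAt_const _ _
    have H := ((hasDerivAt_ratlin (μ₂ * Y₂) 0 _ _ Y₁ hne1).add
      (hasDerivAt_ratlin Y₂ 0 _ _ Y₁ hne2)).add h3
    simp only [Pi.add_def] at H
    rw [← efun] at H
    simp only [pd1]
    rw [H.deriv,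
      show (η₂ * Ebar - η₂ * μ₂ * Y₂) + (-(η₂ * μ₁)) * Y₁
          = η₂ * (Ebar - μ₁ * Y₁ - μ₂ * Y₂) from by ring,
      show (δ₂ * Fbar - δ₂ * Y₂) + (-δ₂) * Y₁ = δ₂ * (Fbar - Y₁ - Y₂) from by ring]
    generalize Ebar - μ₁ * Y₁ - μ₂ * Y₂ = ε at hEne ⊢
    generalize Fbar - Y₁ - Y₂ = f at hFne ⊢
    field_simp
    ring
  -- pd2 φ₂
  have P22 : pd2 φ₂ Y₁ Y₂ =
      μ₂ * (Ebar - μ₁ * Y₁) / (η₂ * (Ebar - μ₁ * Y₁ - μ₂ * Y₂) ^ 2)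
        + (Fbar - Y₁) / (δ₂ * (Fbar - Y₁ - Y₂) ^ 2) + (1 + μ₂) := by
    have hne1 : (η₂ * Ebar - η₂ * μ₁ * Y₁) + (-(η₂ * μ₂)) * Y₂ ≠ 0 := by
      have e : (η₂ * Ebar - η₂ * μ₁ * Y₁) + (-(η₂ * μ₂)) * Y₂
          = η₂ * (Ebar - μ₁ * Y₁ - μ₂ * Y₂) := by ring
      rw [e]; exact ne_of_gt (mul_pos hη₂ hEpos)
    have hne2 : (δ₂ * Fbar - δ₂ * Y₁) + (-δ₂) * Y₂ ≠ 0 := by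
      have e : (δ₂ * Fbar - δ₂ * Y₁) + (-δ₂) * Y₂ = δ₂ * (Fbar - Y₁ - Y₂) := by ring
      rw [e]; exact ne_of_gt (mul_pos hδ₂ hFpos)
    have efun : (fun t => φ₂ Y₁ t) = (fun t : ℝ =>
        (0 + μ₂ * t) / ((η₂ * Ebar - η₂ * μ₁ * Y₁) + (-(η₂ * μ₂)) * t)
          + (0 + 1 * t) / ((δ₂ * Fbar - δ₂ * Y₁) + (-δ₂) * t) + (1 + μ₂) * t) := by
      funext t
      show μ₂ * t / (η₂ * (Ebar - μ₁ * Y₁ - μ₂ * t)) + t / (δ₂ * (Fbar - Y₁ - t))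
          + (1 + μ₂) * t = _
      ring
    have h3 : HasDerivAt (fun t : ℝ => (1 + μ₂) * t) (1 + μ₂) Y₂ := by
      simpa using HasDerivAt.const_mul (1 + μ₂) (hasDerivAt_id Y₂)
    have H := ((hasDerivAt_ratlin 0 μ₂ _ _ Y₂ hne1).add
      (hasDerivAt_ratlin 0 1 _ _ Y₂ hne2)).add h3
    simp only [Pi.add_def] at H
    rw [← efun] at H
    simp only [pd2]
    rw [H.deriv,
      show (η₂ * Ebar - η₂ * μ₁ * Y₁) + (-(η₂ * μ₂)) * Y₂
          = η₂ * (Ebar - μ₁ * Y₁ - μ₂ * Y₂) from by ring,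
      show (δ₂ * Fbar - δ₂ * Y₁) + (-δ₂) * Y₂ = δ₂ * (Fbar - Y₁ - Y₂) from by ring]
    generalize Ebar - μ₁ * Y₁ - μ₂ * Y₂ = ε at hEne ⊢
    generalize Fbar - Y₁ - Y₂ = f at hFne ⊢
    field_simp
    ring
  rw [P11, P21, P12, P22,
    show Ebar - μ₂ * Y₂ = (Ebar - μ₁ * Y₁ - μ₂ * Y₂) + μ₁ * Y₁ from by ring,
    show Ebar - μ₁ * Y₁ = (Ebar - μ₁ * Y₁ - μ₂ * Y₂) + μ₂ * Y₂ from by ring,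
    show Fbar - Y₂ = (Fbar - Y₁ - Y₂) + Y₁ from by ring,
    show Fbar - Y₁ = (Fbar - Y₁ - Y₂) + Y₂ from by ring]
  generalize hg1 : Ebar - μ₁ * Y₁ - μ₂ * Y₂ = ε at hEne hEpos ⊢
  generalize hg2 : Fbar - Y₁ - Y₂ = f at hFne hFpos ⊢
  simp only [add_sub_cancel_right]
  have key :
      (μ₁ * (ε + μ₁ * Y₁) / (η₁ * ε ^ 2) + (f + Y₁) / (δ₁ * f ^ 2) + (1 + μ₁)) *
          (μ₂ * (ε + μ₂ * Y₂) / (η₂ * ε ^ 2) + (f + Y₂) / (δ₂ * f ^ 2) + (1 + μ₂)) -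
        (μ₁ * μ₂ * Y₁ / (η₁ * ε ^ 2) + Y₁ / (δ₁ * f ^ 2)) *
          (μ₁ * μ₂ * Y₂ / (η₂ * ε ^ 2) + Y₂ / (δ₂ * f ^ 2)) =
      (μ₁ / (η₁ * ε) + 1 / (δ₁ * f) + (1 + μ₁)) *
          (μ₂ / (η₂ * ε) + 1 / (δ₂ * f) + (1 + μ₂)) +
        (μ₁ / (η₁ * ε) + 1 / (δ₁ * f) + (1 + μ₁)) *
          (μ₂ ^ 2 * Y₂ / (η₂ * ε ^ 2) + Y₂ / (δ₂ * f ^ 2)) +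
        (μ₂ / (η₂ * ε) + 1 / (δ₂ * f) + (1 + μ₂)) *
          (μ₁ ^ 2 * Y₁ / (η₁ * ε ^ 2) + Y₁ / (δ₁ * f ^ 2)) +
        (μ₁ - μ₂) * (μ₁ * δ₁ * η₂ - μ₂ * δ₂ * η₁) * (Y₁ * Y₂) /
          (η₁ * η₂ * δ₁ * δ₂ * ε ^ 2 * f ^ 2) := by
    field_simp
    ring
  rw [key]
  have hs1 : 0 < μ₁ / (η₁ * ε) + 1 / (δ₁ * f) + (1 + μ₁) := by
    have h1 := div_pos hμ₁ (mul_pos hη₁ hEpos)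
    have h2 := div_pos one_pos (mul_pos hδ₁ hFpos)
    linarith
  have hs2 : 0 < μ₂ / (η₂ * ε) + 1 / (δ₂ * f) + (1 + μ₂) := by
    have h1 := div_pos hμ₂ (mul_pos hη₂ hEpos)
    have h2 := div_pos one_pos (mul_pos hδ₂ hFpos)
    linarith
  have ht1 : 0 ≤ μ₁ ^ 2 * Y₁ / (η₁ * ε ^ 2) + Y₁ / (δ₁ * f ^ 2) := by
    have h1 : 0 ≤ μ₁ ^ 2 * Y₁ / (η₁ * ε ^ 2) :=
      div_nonneg (mul_nonneg (sq_nonneg μ₁) hY₁) (mul_nonneg hη₁.le (sq_nonneg ε))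
    have h2 : 0 ≤ Y₁ / (δ₁ * f ^ 2) := div_nonneg hY₁ (mul_nonneg hδ₁.le (sq_nonneg f))
    linarith
  have ht2 : 0 ≤ μ₂ ^ 2 * Y₂ / (η₂ * ε ^ 2) + Y₂ / (δ₂ * f ^ 2) := by
    have h1 : 0 ≤ μ₂ ^ 2 * Y₂ / (η₂ * ε ^ 2) :=
      div_nonneg (mul_nonneg (sq_nonneg μ₂) hY₂) (mul_nonneg hη₂.le (sq_nonneg ε))
    have h2 : 0 ≤ Y₂ / (δ₂ * f ^ 2) := div_nonneg hY₂ (mul_nonneg hδ₂.le (sq_nonneg f))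
    linarith
  have hsig : 0 ≤ (μ₁ - μ₂) * (μ₁ * δ₁ * η₂ - μ₂ * δ₂ * η₁) * (Y₁ * Y₂) /
      (η₁ * η₂ * δ₁ * δ₂ * ε ^ 2 * f ^ 2) := by
    apply div_nonneg (mul_nonneg hσ (mul_nonneg hY₁ hY₂))
    have hE2 : 0 < ε ^ 2 := pow_pos hEpos 2
    have hF2 : 0 < f ^ 2 := pow_pos hFpos 2
    positivity
  linarith [mul_pos hs1 hs2, mul_nonneg hs1.le ht2, mul_nonneg hs2.le ht1]
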